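/- Let 𝒞 be a nowhere dense class of finite graphs and let r ∈ ℕ. Then there exists an integer c(r) such that for every graph G ∈ 𝒞, both of the following families of subsets of V(G) have VC-dimension at most c(r): the family {N_r[v] : v ∈ V(G)} of closed balls of radius r, and the family {{v} ∪ {u ∈ V(G) : dist_G(u,v) = r} : v ∈ V(G)} of exact-distance-r spheres together with their centers. -/

import Mathlib

open SimpleGraph

/-- A finite simple graph: a bundled finite vertex type together with a simple graph on it. -/
structure FinGraph : Type 1 where
  V : Type
  fintypeV : Fintype V
  graph : SimpleGraph V

attribute [instance] FinGraph.fintypeV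

/-- The set `S` induces a subgraph of `G` of radius at most `r`:
there is a center `c ∈ S` from which every vertex of `S` is at distance at most `r`
inside the subgraph induced by `S`. -/
def hasRadiusLE {V : Type} (G : SimpleGraph V) (S : Set V) (r : ℕ) : Prop :=
  ∃ c : S, ∀ x : S, (G.induce S).edist c x ≤ (r : ℕ∞)

/-- `H` is a depth-`r` minor of `G`: there is a minor model of `H` in `G` with
pairwise disjoint connected branch sets of radius at most `r`. -/
def IsDepthMinor {W V : Type} (r : ℕ) (H : SimpleGraph W) (G : SimpleGraph V) : Prop :=
  ∃ I : W → Set V,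
    (∀ u, hasRadiusLE G (I u) r) ∧
    (Pairwise fun u v => Disjoint (I u) (I v)) ∧
    (∀ u v, H.Adj u v → ∃ a ∈ I u, ∃ b ∈ I v, G.Adj a b)

/-- A class of finite graphs is nowhere dense if there is `f : ℕ → ℕ` such that
`K_{f r}` is not a depth-`r` minor of any member, for every `r`. -/
def NowhereDense (C : Set FinGraph) : Prop :=
  ∃ f : ℕ → ℕ, ∀ r : ℕ, ∀ G ∈ C, ¬ IsDepthMinor r (completeGraph (Fin (f r))) G.graph

/-- `H` is (isomorphic to) a subgraph of `G`. -/
def IsSubgraphOf (H G : FinGraph) : Prop :=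
  ∃ f : H.V ↪ G.V, ∀ u v, H.graph.Adj u v → G.graph.Adj (f u) (f v)

/-- A class of graphs is monotone if it is closed under taking subgraphs. -/
def MonotoneClass (C : Set FinGraph) : Prop :=
  ∀ G ∈ C, ∀ H : FinGraph, IsSubgraphOf H G → H ∈ C

/-- The closed ball of radius `r` around `v`: `N_r[v]`. -/
def ball {V : Type} (G : SimpleGraph V) (r : ℕ) (v : V) : Set V :=
  {u | G.edist u v ≤ (r : ℕ∞)}

/-- The `r`-neighborhood complexity `ν_r(G,A)`. -/
noncomputable def nu {V : Type} (G : SimpleGraph V) (r : ℕ) (A : Set V) : ℕ :=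
  {S : Set V | ∃ v : V, S = ball G r v ∩ A}.ncard

/-- The value of the `r`-distance profile of `u` at `x`:
`dist_G(u,x)` if it is at most `r`, and `∞` otherwise. -/
noncomputable def profVal {V : Type} (G : SimpleGraph V) (r : ℕ) (u x : V) : ℕ∞ :=
  if G.edist u x ≤ (r : ℕ∞) then G.edist u x else ⊤

/-- The distance profile complexity `ν̂_r(G,A)`: the number of distinct
`r`-distance profiles `π_r[u,A] : A → {0,…,r,∞}` over `u ∈ V(G)`. -/
noncomputable def nuHat {V : Type} (G : SimpleGraph V) (r : ℕ) (A : Set V) : ℕ :=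
  {f : ↥A → ℕ∞ | ∃ u : V, f = fun x : ↥A => profVal G r u ↑x}.ncard

/-- A family `F` of subsets shatters `X` if every subset of `X` is an intersection of
`X` with a member of `F`. -/
def Shatters {U : Type} (F : Set (Set U)) (X : Set U) : Prop :=
  ∀ Y ⊆ X, ∃ S ∈ F, X ∩ S = Y

/-- The family `F` has VC-dimension at most `d`. -/
def VCDimLE {U : Type} (F : Set (Set U)) (d : ℕ) : Prop :=
  ∀ X : Set U, Shatters F X → X.ncard ≤ d

/-- `WReach_r[G,L,v]`: the set of vertices weakly `r`-reachable from `v` with respect to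
the linear order `L`: vertices `u` joined to `v` by a path of length at most `r` on which
`u` is the `L`-least vertex. -/
def WReach {V : Type} (G : SimpleGraph V) (L : LinearOrder V) (r : ℕ) (v : V) : Set V :=
  {u | ∃ p : G.Walk u v, p.IsPath ∧ p.length ≤ r ∧ ∀ x ∈ p.support, L.le u x}

/-- `B` is `r`-independent in `G`: distinct vertices of `B` are at distance more than `r`. -/
def RIndep {V : Type} (G : SimpleGraph V) (r : ℕ) (B : Set V) : Prop :=
  ∀ u ∈ B, ∀ v ∈ B, u ≠ v → (r : ℕ∞) < G.edist u v

/-- The length of a shortest `A`-avoiding path from `u` to `v`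
(all vertices except possibly `v` lie outside `A`); `∞` if there is none. -/
noncomputable def avoidDist {V : Type} (G : SimpleGraph V) (A : Set V) (u v : V) : ℕ∞ :=
  sInf {n : ℕ∞ | ∃ p : G.Walk u v, p.IsPath ∧ (∀ x ∈ p.support, x ≠ v → x ∉ A) ∧ (p.length : ℕ∞) = n}

/-- The value of the `r`-projection profile `ρ_r[u,A]` at `v`. -/
noncomputable def projProfVal {V : Type} (G : SimpleGraph V) (r : ℕ) (A : Set V) (u v : V) : ℕ∞ :=
  if avoidDist G A u v ≤ (r : ℕ∞) then avoidDist G A u v else ⊤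

/-- The `r`-projection `M_r(u,A)` of `u` on `A`. -/
def Mproj {V : Type} (G : SimpleGraph V) (r : ℕ) (A : Set V) (u : V) : Set V :=
  {v ∈ A | avoidDist G A u v ≤ (r : ℕ∞)}

/-- The projection profile complexity `μ̂_r(G,A)`: the number of distinct
`r`-projection profiles `ρ_r[u,A]` over `u ∈ V(G) ∖ A`. -/
noncomputable def muHat {V : Type} (G : SimpleGraph V) (r : ℕ) (A : Set V) : ℕ :=
  {f : ↥A → ℕ∞ | ∃ u : V, u ∉ A ∧ f = fun v : ↥A => projProfVal G r A u ↑v}.ncard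

/-- `D` is a `(Z,r)`-dominator in `G`: every vertex of `Z` is at distance at most `r`
from some vertex of `D`. -/
def IsDominator {V : Type} (G : SimpleGraph V) (r : ℕ) (Z D : Set V) : Prop :=
  ∀ z ∈ Z, ∃ d ∈ D, G.edist z d ≤ (r : ℕ∞)

/-- `D` is a minimum-size `(Z,r)`-dominator in `G`. -/
def IsMinDominator {V : Type} (G : SimpleGraph V) (r : ℕ) (Z D : Set V) : Prop :=
  IsDominator G r Z D ∧ ∀ D' : Set V, IsDominator G r Z D' → D.ncard ≤ D'.ncard

/-- `Z` is an `r`-domination core of `G`: every minimum-size `(Z,r)`-dominator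
is an `r`-dominating set of `G`. -/
def IsDomCore {V : Type} (G : SimpleGraph V) (r : ℕ) (Z : Set V) : Prop :=
  ∀ D : Set V, IsMinDominator G r Z D → IsDominator G r Set.univ D

/-- `ds_r(G,Z)`: the minimum size of a `(Z,r)`-dominator in `G`. -/
noncomputable def dsr {V : Type} (G : SimpleGraph V) (r : ℕ) (Z : Set V) : ℕ :=
  sInf {n : ℕ | ∃ D : Set V, IsDominator G r Z D ∧ D.ncard = n}

namespace VCAux

/-- A system of points and pair-centers witnessing ball-shattering structure. -/
structure BallSystem {V : Type} (G : SimpleGraph V) (ρ n : ℕ) where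
  x : Fin n → V
  w : Fin n → Fin n → V
  hinj : Function.Injective x
  hsymm : ∀ i j, w i j = w j i
  hnear : ∀ i j, i ≠ j → G.edist (x i) (w i j) ≤ (ρ : ℕ∞)
  hfar : ∀ i j k, i ≠ j → k ≠ i → k ≠ j → ¬ (G.edist (x k) (w i j) ≤ (ρ : ℕ∞))

namespace BallSystem

variable {V : Type} {G : SimpleGraph V} {ρ n : ℕ} (B : BallSystem G ρ n)

/-- Corridor condition: `u` lies on a short route between `x m` and the pair center `w m p`. -/
def cnd (m p : Fin n) (u : V) : Prop :=
  G.edist u (B.x m) + G.edist u (B.w m p) ≤ (ρ : ℕ∞)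

/-- `m` claims `u`. -/
def clm (m : Fin n) (u : V) : Prop := ∃ p, p ≠ m ∧ B.cnd m p u

/-- `m` beats `q` at `u` (lexicographic). -/
def bt (u : V) (m q : Fin n) : Prop :=
  G.edist u (B.x m) < G.edist u (B.x q) ∨
    (G.edist u (B.x m) = G.edist u (B.x q) ∧ m < q)

/-- The branch set owned by `m`. -/
def iset (m : Fin n) : Set V :=
  {u | B.clm m u ∧ ∀ q, q ≠ m → B.clm q u → B.bt u m q}

lemma bt_le {u m q} (h : B.bt u m q) : G.edist u (B.x m) ≤ G.edist u (B.x q) := by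
  rcases h with h | ⟨h, _⟩
  · exact h.le
  · exact h.le

lemma bt_asymm {u m q} (h1 : B.bt u m q) (h2 : B.bt u q m) : False := by
  rcases h1 with h1 | ⟨h1, h1'⟩ <;> rcases h2 with h2 | ⟨h2, h2'⟩
  · exact absurd (h1.trans h2) (lt_irrefl _)
  · exact absurd (h2 ▸ h1) (lt_irrefl _)
  · exact absurd (h1 ▸ h2) (lt_irrefl _)
  · exact absurd (h1'.trans h2') (lt_irrefl _)

lemma bt_total {u m q} (h : m ≠ q) : B.bt u m q ∨ B.bt u q m := by
  rcases lt_trichotomy (G.edist u (B.x m)) (G.edist u (B.x q)) with hlt | heq | hgt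
  · exact Or.inl (Or.inl hlt)
  · rcases lt_or_gt_of_ne (show m ≠ q from h) with hmq | hmq
    · exact Or.inl (Or.inr ⟨heq, hmq⟩)
    · exact Or.inr (Or.inr ⟨heq.symm, hmq⟩)
  · exact Or.inr (Or.inl hgt)

/-- Key exclusion: a vertex in the `(m,p)` corridor cannot be at least as close to a third `x q`. -/
lemma co {m p q : Fin n} {u : V} (hp : p ≠ m) (hc : B.cnd m p u) (hqm : q ≠ m) (hqp : q ≠ p)
    (hle : G.edist u (B.x q) ≤ G.edist u (B.x m)) : False := by
  apply B.hfar m p q (Ne.symm hp) hqm hqp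
  calc G.edist (B.x q) (B.w m p) ≤ G.edist (B.x q) u + G.edist u (B.w m p) :=
        SimpleGraph.edist_triangle
    _ = G.edist u (B.x q) + G.edist u (B.w m p) := by rw [SimpleGraph.edist_comm]
    _ ≤ G.edist u (B.x m) + G.edist u (B.w m p) := add_le_add_left hle _
    _ ≤ (ρ : ℕ∞) := hc

lemma exists_iset {m : Fin n} {u : V} (h : B.clm m u) : ∃ m', u ∈ B.iset m' := by
  classical
  set S : Finset (Fin n) := Finset.univ.filter (fun q => B.clm q u) with hS
  have hmS : m ∈ S := by simp [hS, h]
  obtain ⟨s, hsS, hmin⟩ := S.exists_min_image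
    (fun q => toLex (G.edist u (B.x q), q)) ⟨m, hmS⟩
  refine ⟨s, ?_, fun q hq hclm => ?_⟩
  · exact (Finset.mem_filter.1 hsS).2
  · have hqS : q ∈ S := by simp [hS, hclm]
    have := hmin q hqS
    rw [Prod.Lex.le_iff] at this
    rcases this with hlt | ⟨heq, hle⟩
    · exact Or.inl hlt
    · exact Or.inr ⟨heq, lt_of_le_of_ne hle (Ne.symm hq)⟩

lemma iset_disj {m q : Fin n} (h : m ≠ q) : Disjoint (B.iset m) (B.iset q) := by
  rw [Set.disjoint_left]
  rintro u ⟨hm1, hm2⟩ ⟨hq1, hq2⟩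
  exact B.bt_asymm (hm2 q h.symm hq1) (hq2 m h hm1)

lemma x_mem_iset (hn : 2 ≤ n) (m : Fin n) : B.x m ∈ B.iset m := by
  have : Nontrivial (Fin n) := Fin.nontrivial_iff_two_le.mpr hn
  obtain ⟨p, hp⟩ := exists_ne m
  refine ⟨⟨p, hp, ?_⟩, fun q hq _ => ?_⟩
  · show G.edist (B.x m) (B.x m) + G.edist (B.x m) (B.w m p) ≤ (ρ : ℕ∞)
    rw [SimpleGraph.edist_self, zero_add]
    exact B.hnear m p (Ne.symm hp)
  · left
    rw [SimpleGraph.edist_self]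
    exact G.edist_pos_of_ne fun hxx => hq (B.hinj hxx.symm)

lemma clm_of_cnd {m p : Fin n} {u : V} (hp : p ≠ m) (hc : B.cnd m p u) : B.clm m u := ⟨p, hp, hc⟩

lemma edist_le_of_cnd {m p : Fin n} {u : V} (hc : B.cnd m p u) :
    G.edist u (B.x m) ≤ (ρ : ℕ∞) := le_trans le_self_add hc

/-- Stepping along a geodesic toward `x m` stays in the branch set of `m`. -/
lemma step {m p : Fin n} {u z : V} (hu : u ∈ B.iset m) (hp : p ≠ m) (hc : B.cnd m p u)
    (hadj : G.Adj u z) (hz : G.edist z (B.x m) + 1 = G.edist u (B.x m)) :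
    z ∈ B.iset m ∧ B.cnd m p z := by
  have hzu : G.edist z u = 1 := edist_eq_one_iff_adj.2 hadj.symm
  have huz : G.edist u z = 1 := edist_eq_one_iff_adj.2 hadj
  have hcz : B.cnd m p z := by
    calc G.edist z (B.x m) + G.edist z (B.w m p)
        ≤ G.edist z (B.x m) + (G.edist z u + G.edist u (B.w m p)) :=
          add_le_add_right SimpleGraph.edist_triangle _
      _ = (G.edist z (B.x m) + 1) + G.edist u (B.w m p) := by rw [hzu, add_assoc]
      _ = G.edist u (B.x m) + G.edist u (B.w m p) := by rw [hz]
      _ ≤ (ρ : ℕ∞) := hc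
  refine ⟨⟨B.clm_of_cnd hp hcz, fun q hq hclm => ?_⟩, hcz⟩
  rcases B.bt_total (Ne.symm hq) with hbt | hbt
  · exact hbt
  exfalso
  -- q beats m at z
  have hqle : G.edist z (B.x q) ≤ G.edist z (B.x m) := B.bt_le hbt
  by_cases hqp : q = p
  · subst hqp
    -- the tie case within the pair (m, q=p)
    -- a := edist u (x m), b := edist u (x p), a' := edist z (x m), b' := edist z (x p)
    have hma : G.edist u (B.x m) ≤ G.edist u (B.x q) ∧
        (G.edist u (B.x m) = G.edist u (B.x q) → m < q) := by
      by_cases hclmu : B.clm q u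
      · have := hu.2 q hq hclmu
        rcases this with hlt | ⟨heq, hlt⟩
        · exact ⟨hlt.le, fun he => absurd (he ▸ hlt) (lt_irrefl _)⟩
        · exact ⟨heq.le, fun _ => hlt⟩
      · -- ¬ clm q u: then edist u (x m) < edist u (x q)
        have : ¬ (G.edist u (B.x q) ≤ G.edist u (B.x m)) := by
          intro hle
          apply hclmu
          refine ⟨m, Ne.symm hq, ?_⟩
          show G.edist u (B.x q) + G.edist u (B.w q m) ≤ (ρ : ℕ∞)
          rw [← B.hsymm m q]
          calc G.edist u (B.x q) + G.edist u (B.w m q)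
              ≤ G.edist u (B.x m) + G.edist u (B.w m q) := add_le_add_left hle _
            _ ≤ (ρ : ℕ∞) := hc
        have hlt := lt_of_not_ge this
        exact ⟨hlt.le, fun he => absurd (he ▸ hlt) (lt_irrefl _)⟩
    -- chain of inequalities
    have h1 : G.edist u (B.x q) ≤ 1 + G.edist z (B.x q) := by
      calc G.edist u (B.x q) ≤ G.edist u z + G.edist z (B.x q) := SimpleGraph.edist_triangle
        _ = 1 + G.edist z (B.x q) := by rw [huz]
    have h2 : 1 + G.edist z (B.x q) ≤ 1 + G.edist z (B.x m) := add_le_add_right hqle _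
    have h3 : 1 + G.edist z (B.x m) = G.edist u (B.x m) := by rw [add_comm]; exact hz
    -- all equalities
    have hab : G.edist u (B.x m) = G.edist u (B.x q) :=
      le_antisymm hma.1 (h1.trans (h2.trans_eq h3))
    have hmq : m < q := hma.2 hab
    have hone : (1 : ℕ∞) ≠ ⊤ := by simp
    have hzeq : G.edist z (B.x q) = G.edist z (B.x m) := by
      have e1 : 1 + G.edist z (B.x q) = 1 + G.edist z (B.x m) := by
        refine le_antisymm h2 ?_
        rw [h3]
        exact hab.le.trans h1
      exact WithTop.add_left_cancel hone e1
    rcases hbt with hlt | ⟨_, hqm⟩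
    · exact absurd (hzeq ▸ hlt) (lt_irrefl _)
    · exact absurd (hmq.trans hqm) (lt_irrefl _)
  · exact B.co hp hcz hq hqp hqle

/-- Every member of a branch set reaches the center inside the branch set. -/
lemma reach (hn : 2 ≤ n) (m p : Fin n) (hp : p ≠ m) :
    ∀ (k : ℕ) (u : V) (hu : u ∈ B.iset m) (_ : B.cnd m p u)
      (_ : G.edist u (B.x m) = (k : ℕ∞)),
      (G.induce (B.iset m)).edist ⟨B.x m, B.x_mem_iset hn m⟩ ⟨u, hu⟩ ≤ (k : ℕ∞) := by
  intro k
  induction k with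
  | zero =>
    intro u hu _ hd
    have : u = B.x m := by
      rw [Nat.cast_zero, SimpleGraph.edist_eq_zero_iff] at hd
      exact hd
    subst this
    simp [SimpleGraph.edist_self]
  | succ k ih =>
    intro u hu hc hd
    obtain ⟨W, hW⟩ := SimpleGraph.exists_walk_of_edist_eq_coe hd
    cases W with
    | nil => simp at hW
    | @cons _ y _ hadj q =>
      have hql : q.length = k := by
        simp only [SimpleGraph.Walk.length_cons] at hW
        omega
      have hyd : G.edist y (B.x m) = (k : ℕ∞) := by
        have hle : G.edist y (B.x m) ≤ (k : ℕ∞) := by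
          have := SimpleGraph.edist_le (G := G) q
          rwa [hql] at this
        have hge : (k : ℕ∞) ≤ G.edist y (B.x m) := by
          by_contra hlt
          push_neg at hlt
          have huy : G.edist u y = 1 := edist_eq_one_iff_adj.2 hadj
          have : G.edist u (B.x m) ≤ G.edist u y + G.edist y (B.x m) :=
            SimpleGraph.edist_triangle
          rw [hd, huy] at this
          -- (k+1 : ℕ∞) ≤ 1 + edist y (x m) < 1 + k = k+1
          have h2 : (1 : ℕ∞) + G.edist y (B.x m) < 1 + (k : ℕ∞) := by
            exact WithTop.add_lt_add_left ENat.one_ne_top hlt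
          have h3 : ((k : ℕ∞) + 1) < 1 + (k : ℕ∞) := lt_of_le_of_lt this h2
          rw [add_comm] at h3
          exact absurd h3 (lt_irrefl _)
        exact le_antisymm hle hge
      have hz : G.edist y (B.x m) + 1 = G.edist u (B.x m) := by
        rw [hyd, hd]
        push_cast
        ring
      obtain ⟨hymem, hcy⟩ := B.step hu hp hc hadj hz
      have ihy := ih y hymem hcy hyd
      have hadj' : (G.induce (B.iset m)).Adj ⟨u, hu⟩ ⟨y, hymem⟩ := by
        simp [SimpleGraph.comap_adj]
        exact hadj
      calc (G.induce (B.iset m)).edist ⟨B.x m, B.x_mem_iset hn m⟩ ⟨u, hu⟩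
          ≤ (G.induce (B.iset m)).edist ⟨B.x m, B.x_mem_iset hn m⟩ ⟨y, hymem⟩
            + (G.induce (B.iset m)).edist ⟨y, hymem⟩ ⟨u, hu⟩ := SimpleGraph.edist_triangle
        _ ≤ (k : ℕ∞) + 1 := by
            apply add_le_add ihy
            rw [SimpleGraph.edist_eq_one_iff_adj.2 hadj'.symm]
        _ = ((k + 1 : ℕ) : ℕ∞) := by push_cast; ring

lemma hasRadius (hn : 2 ≤ n) (m : Fin n) : hasRadiusLE G (B.iset m) ρ := by
  refine ⟨⟨B.x m, B.x_mem_iset hn m⟩, fun y => ?_⟩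
  obtain ⟨p, hp, hc⟩ := y.2.1
  have hle : G.edist (y : V) (B.x m) ≤ (ρ : ℕ∞) := B.edist_le_of_cnd hc
  have hne : G.edist (y : V) (B.x m) ≠ ⊤ := ne_top_of_le_ne_top (by simp) hle
  lift G.edist (y : V) (B.x m) to ℕ using hne with k hk
  have := B.reach hn m p hp k y y.2 hc hk.symm
  have hkρ : (k : ℕ∞) ≤ (ρ : ℕ∞) := by rw [hk] at hle ⊢; exact hle
  exact le_trans (by exact this) hkρ

/-- Vertices in the `(m',m)` corridor are owned by `m` or `m'`. -/
lemma corridor {m m' : Fin n} {u : V} (hmm' : m ≠ m') (hu : B.cnd m' m u) :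
    u ∈ B.iset m ∪ B.iset m' := by
  have hclm : B.clm m' u := ⟨m, hmm', hu⟩
  obtain ⟨s, hs⟩ := B.exists_iset hclm
  by_cases hsm : s = m
  · exact Or.inl (hsm ▸ hs)
  by_cases hsm' : s = m'
  · exact Or.inr (hsm' ▸ hs)
  exfalso
  have hbt := hs.2 m' (Ne.symm hsm') hclm
  exact B.co hmm' hu hsm' hsm (B.bt_le hbt)

/-- Find a crossing edge along a walk whose support stays in two disjoint branch sets. -/
lemma cross {s t : Fin n} (hst : s ≠ t) {a b : V} (W : G.Walk a b)
    (hsupp : ∀ u ∈ W.support, u ∈ B.iset s ∪ B.iset t)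
    (ha : a ∈ B.iset s) (hb : b ∈ B.iset t) :
    ∃ a' ∈ B.iset s, ∃ b' ∈ B.iset t, G.Adj a' b' := by
  induction W with
  | nil =>
    exact absurd ha (Set.disjoint_left.1 (B.iset_disj hst) · hb)
  | @cons c y d hadj q ih =>
    have hy : y ∈ B.iset s ∪ B.iset t := hsupp y (by simp)
    rcases hy with hy | hy
    · exact ih (fun u hu => hsupp u (by simp [hu])) hy hb
    · exact ⟨c, ha, y, hy, hadj⟩

/-- If the pair center of `{m, m'}` is owned by `m`, produce an edge between the branch sets. -/
lemma adj_helper {m m' : Fin n} (hn : 2 ≤ n) (hmm' : m ≠ m') (hv : B.w m m' ∈ B.iset m) :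
    ∃ a ∈ B.iset m, ∃ b ∈ B.iset m', G.Adj a b := by
  classical
  have hvm' : G.edist (B.w m m') (B.x m') ≤ (ρ : ℕ∞) := by
    rw [B.hsymm m m', SimpleGraph.edist_comm]
    exact B.hnear m' m (Ne.symm hmm')
  have hne : G.edist (B.w m m') (B.x m') ≠ ⊤ := ne_top_of_le_ne_top (by simp) hvm'
  obtain ⟨W, hW⟩ := SimpleGraph.exists_walk_of_edist_ne_top hne
  have hsupp : ∀ u ∈ W.support, u ∈ B.iset m ∪ B.iset m' := by
    intro u hu
    have hcu : B.cnd m' m u := by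
      show G.edist u (B.x m') + G.edist u (B.w m' m) ≤ (ρ : ℕ∞)
      rw [← B.hsymm m m']
      have h1 : G.edist (B.w m m') u ≤ ((W.takeUntil u hu).length : ℕ∞) :=
        SimpleGraph.edist_le _
      have h2 : G.edist u (B.x m') ≤ ((W.dropUntil u hu).length : ℕ∞) :=
        SimpleGraph.edist_le _
      have h3 : (W.takeUntil u hu).length + (W.dropUntil u hu).length = W.length := by
        have := congr_arg SimpleGraph.Walk.length (W.take_spec hu)
        rwa [SimpleGraph.Walk.length_append] at this
      calc G.edist u (B.x m') + G.edist u (B.w m m')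
          ≤ ((W.dropUntil u hu).length : ℕ∞) + ((W.takeUntil u hu).length : ℕ∞) := by
            refine add_le_add h2 ?_
            rw [SimpleGraph.edist_comm]
            exact h1
        _ = (W.length : ℕ∞) := by rw [← Nat.cast_add, ← h3, Nat.add_comm]
        _ ≤ (ρ : ℕ∞) := by rw [hW]; exact hvm'
    exact B.corridor hmm' hcu
  exact B.cross hmm' W hsupp hv (B.x_mem_iset hn m')

/-- Adjacency between any two distinct branch sets. -/
lemma adjacent (hn : 2 ≤ n) {m m' : Fin n} (hmm' : m ≠ m') :
    ∃ a ∈ B.iset m, ∃ b ∈ B.iset m', G.Adj a b := by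
  have hc : B.cnd m m' (B.w m m') := by
    show G.edist (B.w m m') (B.x m) + G.edist (B.w m m') (B.w m m') ≤ (ρ : ℕ∞)
    rw [SimpleGraph.edist_self, add_zero, SimpleGraph.edist_comm]
    exact B.hnear m m' hmm'
  have hclm : B.clm m (B.w m m') := ⟨m', Ne.symm hmm', hc⟩
  obtain ⟨s, hs⟩ := B.exists_iset hclm
  by_cases hsm : s = m
  · subst hsm
    exact B.adj_helper hn hmm' hs
  by_cases hsm' : s = m'
  · subst hsm'
    have hv' : B.w s m ∈ B.iset s := by rw [B.hsymm s m]; exact hs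
    obtain ⟨a, haa, b, hbb, hab⟩ := B.adj_helper hn (Ne.symm hmm') hv'
    exact ⟨b, hbb, a, haa, hab.symm⟩
  exfalso
  have hbt := hs.2 m (Ne.symm hsm) hclm
  exact B.co (Ne.symm hmm') hc hsm hsm' (B.bt_le hbt)


end BallSystem

/-- The main construction: a `BallSystem` yields a depth-`ρ` complete-graph minor. -/
theorem BallSystem.isDepthMinor {V : Type} {G : SimpleGraph V} {ρ n : ℕ}
    (B : BallSystem G ρ n) (hn : 2 ≤ n) : IsDepthMinor ρ (completeGraph (Fin n)) G := by
  refine ⟨B.iset, fun m => B.hasRadius hn m, fun m m' hmm' => B.iset_disj hmm', ?_⟩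
  intro m m' hadj
  exact B.adjacent hn (by simpa using hadj)

/-- Degenerate depth minors. -/
lemma trivialMinor0 {V : Type} (G : SimpleGraph V) (ρ : ℕ) :
    IsDepthMinor ρ (completeGraph (Fin 0)) G := by
  refine ⟨fun i => i.elim0, fun i => i.elim0, fun i => i.elim0, fun i => i.elim0⟩

lemma trivialMinor1 {V : Type} (G : SimpleGraph V) (ρ : ℕ) (x0 : V) :
    IsDepthMinor ρ (completeGraph (Fin 1)) G := by
  refine ⟨fun _ => {x0}, fun _ => ⟨⟨x0, rfl⟩, fun y => ?_⟩, fun i j hij => absurd (Subsingleton.elim i j) hij, fun i j hij => absurd (Subsingleton.elim i j) (by simpa using hij)⟩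
  have : y = ⟨x0, rfl⟩ := Subtype.ext y.2
  rw [this, SimpleGraph.edist_self]
  exact zero_le

/-- Key result: sets shattered by `ρ`-balls have size at most `N`,
provided `K_N` is not a depth-`ρ` minor. -/
theorem ball_vc_bound {V : Type} [Fintype V] {G : SimpleGraph V} {ρ N : ℕ}
    (hG : ¬ IsDepthMinor ρ (completeGraph (Fin N)) G)
    (X : Set V) (hsh : Shatters {S : Set V | ∃ v : V, S = ball G ρ v} X) :
    X.ncard ≤ N := by
  classical
  by_contra hcon
  push_neg at hcon
  rcases Nat.eq_zero_or_pos N with hN0 | hN1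
  · exact hG (hN0 ▸ trivialMinor0 G ρ)
  rcases eq_or_lt_of_le (show 1 ≤ N from hN1) with hN1' | hN2
  · -- N = 1, X nonempty
    obtain ⟨x0, _⟩ : X.Nonempty := Set.nonempty_of_ncard_ne_zero (by omega)
    exact hG (hN1' ▸ trivialMinor1 G ρ x0)
  -- 2 ≤ N
  obtain ⟨T, hTX, hTcard⟩ := Set.exists_subset_card_eq hcon.le
  have hTfin : T.Finite := Set.toFinite T
  have hcard : hTfin.toFinset.card = N := by
    rw [← Set.ncard_eq_toFinset_card T hTfin]
    exact hTcard
  let e : Fin N ≃ hTfin.toFinset := (hTfin.toFinset.equivFin.trans (finCongr hcard)).symm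
  set x : Fin N → V := fun i => (e i : V) with hx
  have hxinj : Function.Injective x := fun i j hij => by
    apply e.injective
    exact Subtype.ext hij
  have hxX : ∀ i, x i ∈ X := fun i => hTX (hTfin.mem_toFinset.1 (e i).2)
  have hpair : ∀ i j : Fin N, ∃ v : V, X ∩ ball G ρ v = {x i, x j} := by
    intro i j
    obtain ⟨S, hSmem, hStr⟩ := hsh {x i, x j}
      (by rintro u (rfl | rfl) <;> [exact hxX i; exact hxX j])
    obtain ⟨v, rfl⟩ := hSmem
    exact ⟨v, hStr⟩
  set w : Fin N → Fin N → V := fun i j =>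
    if i ≤ j then (hpair i j).choose else (hpair j i).choose with hw
  have hwspec : ∀ i j : Fin N, X ∩ ball G ρ (w i j) = {x i, x j} := by
    intro i j
    by_cases hij : i ≤ j
    · simp only [hw, if_pos hij]
      exact (hpair i j).choose_spec
    · simp only [hw, if_neg hij]
      rw [(hpair j i).choose_spec]
      exact Set.pair_comm _ _
  have hwsymm : ∀ i j, w i j = w j i := by
    intro i j
    rcases le_total i j with h | h
    · by_cases h' : j ≤ i
      · have : i = j := le_antisymm h h'
        subst this; rfl
      · simp [hw, if_pos h, if_neg h']
    · by_cases h' : i ≤ j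
      · have : j = i := le_antisymm h h'
        subst this; rfl
      · simp [hw, if_neg h', if_pos h]
  have B : BallSystem G ρ N :=
    { x := x, w := w, hinj := hxinj, hsymm := hwsymm
      hnear := by
        intro i j _
        have : x i ∈ X ∩ ball G ρ (w i j) := by
          rw [hwspec i j]; exact Or.inl rfl
        exact this.2
      hfar := by
        intro i j k _ hki hkj hball
        have : x k ∈ X ∩ ball G ρ (w i j) := ⟨hxX k, hball⟩
        rw [hwspec i j] at this
        rcases this with h | h
        · exact hki (hxinj h)
        · exact hkj (hxinj h) }
  exact hG (B.isDepthMinor hN2)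

/- Numeric helper lemmas -/

lemma two_pow_ge_sq {s : ℕ} (hs : 6 ≤ s) : (s+1)*(s+1) ≤ 2^s := by
  induction s, hs using Nat.le_induction with
  | base => norm_num
  | succ s hs ih =>
    have h1 : (s+2)*(s+2) ≤ 2*((s+1)*(s+1)) := by nlinarith
    calc (s+1+1)*(s+1+1) = (s+2)*(s+2) := by ring
      _ ≤ 2*((s+1)*(s+1)) := h1
      _ ≤ 2*2^s := by omega
      _ = 2^(s+1) := by ring

lemma log_succ_le_sqrt {n : ℕ} (hn : 64 ≤ n) : Nat.log 2 n + 1 ≤ Nat.sqrt n := by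
  have hs8 : 8 ≤ Nat.sqrt n := Nat.le_sqrt.2 (by omega)
  have hlog : Nat.log 2 n < Nat.sqrt n := by
    by_contra hc
    push_neg at hc
    have h1 : 2^(Nat.sqrt n) ≤ 2^(Nat.log 2 n) := Nat.pow_le_pow_right (by norm_num) hc
    have h2 : 2^(Nat.log 2 n) ≤ n := Nat.pow_log_le_self 2 (by omega)
    have h3 : n < (Nat.sqrt n + 1) * (Nat.sqrt n + 1) := Nat.lt_succ_sqrt n
    have h4 : (Nat.sqrt n + 1) * (Nat.sqrt n + 1) ≤ 2^(Nat.sqrt n) :=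
      two_pow_ge_sq (by omega)
    omega
  omega

lemma main_numeric {E n : ℕ} (h : 2^n ≤ (n+1)^E) : n ≤ 64 + (E+1)*(E+1) := by
  by_contra hc
  push_neg at hc
  have hn64 : 64 ≤ n := by omega
  have h2 : n + 1 ≤ 2^(Nat.log 2 n + 1) := Nat.lt_pow_succ_log_self (by norm_num) n
  have h3 : 2^n ≤ 2^((Nat.log 2 n + 1)*E) := by
    calc 2^n ≤ (n+1)^E := h
      _ ≤ (2^(Nat.log 2 n + 1))^E := Nat.pow_le_pow_left h2 E
      _ = 2^((Nat.log 2 n + 1)*E) := by rw [← pow_mul]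
  have h4 : n ≤ (Nat.log 2 n + 1)*E := (Nat.pow_le_pow_iff_right (by norm_num)).1 h3
  have h5 : Nat.log 2 n + 1 ≤ Nat.sqrt n := log_succ_le_sqrt hn64
  have h6 : n ≤ Nat.sqrt n * E := le_trans h4 (Nat.mul_le_mul_right E h5)
  rcases le_or_gt (Nat.sqrt n) E with hse | hse
  · have : n < (Nat.sqrt n + 1) * (Nat.sqrt n + 1) := Nat.lt_succ_sqrt n
    have : n < (E+1)*(E+1) := lt_of_lt_of_le this (by
      apply Nat.mul_le_mul <;> omega)
    omega
  · have h7 : Nat.sqrt n * E < Nat.sqrt n * Nat.sqrt n := by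
      have hpos : 0 < Nat.sqrt n := by omega
      exact Nat.mul_lt_mul_of_pos_left hse hpos
    have h8 : Nat.sqrt n * Nat.sqrt n ≤ n := Nat.sqrt_le n
    omega

lemma sum_choose_le {d n : ℕ} (hdn : d ≤ n) :
    (∑ i ∈ Finset.range (d+1), n.choose i) ≤ (n+1)^(d+1) := by
  have h1 : ∀ i ∈ Finset.range (d+1), n.choose i ≤ (n+1)^d := by
    intro i hi
    rw [Finset.mem_range] at hi
    calc n.choose i ≤ n^i := Nat.choose_le_pow n i
      _ ≤ (n+1)^i := Nat.pow_le_pow_left (by omega) i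
      _ ≤ (n+1)^d := Nat.pow_le_pow_right (by omega) (by omega)
  calc (∑ i ∈ Finset.range (d+1), n.choose i) ≤ (d+1) * (n+1)^d := by
        have := Finset.sum_le_card_nsmul (Finset.range (d+1)) _ _ h1
        simpa using this
    _ ≤ (n+1) * (n+1)^d := Nat.mul_le_mul_right _ (by omega)
    _ = (n+1)^(d+1) := by ring

lemma edist_eq_succ_iff {a : ℕ∞} {r' : ℕ} :
    a = ((r'+1 : ℕ) : ℕ∞) ↔ (a ≤ ((r'+1 : ℕ) : ℕ∞) ∧ ¬ a ≤ ((r' : ℕ) : ℕ∞)) := by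
  constructor
  · rintro rfl
    refine ⟨le_rfl, fun h => ?_⟩
    have : (r'+1 : ℕ) ≤ r' := by exact_mod_cast h
    omega
  · rintro ⟨h1, h2⟩
    have h3 : ((r' : ℕ) : ℕ∞) < a := lt_of_not_ge h2
    have h4 : ((r' : ℕ) : ℕ∞) + 1 ≤ a := (ENat.add_one_le_iff (by simp)).2 h3
    refine le_antisymm h1 ?_
    calc ((r'+1 : ℕ) : ℕ∞) = ((r' : ℕ) : ℕ∞) + 1 := by push_cast; ring
      _ ≤ a := h4

/-- Number of distinct ball traces on a finset, via Sauer–Shelah (Pajor). -/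
lemma trace_card_bound {V : Type} [Fintype V] [DecidableEq V] {G : SimpleGraph V} (ρ d : ℕ)
    (hvc : ∀ X' : Set V, Shatters {S : Set V | ∃ v : V, S = ball G ρ v} X' → X'.ncard ≤ d)
    (Xf : Finset V) :
    ∀ (Tr : V → Finset V), (∀ v u, u ∈ Tr v ↔ u ∈ Xf ∧ G.edist u v ≤ (ρ : ℕ∞)) →
    (Finset.univ.image Tr).card ≤ ∑ i ∈ Finset.range (d+1), Xf.card.choose i := by
  intro Tr hTrmem
  classical
  set 𝒜 := Finset.univ.image Tr with h𝒜
  have h1 : 𝒜.card ≤ 𝒜.shatterer.card := Finset.card_le_card_shatterer 𝒜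
  have h2 : 𝒜.shatterer ⊆ (Xf.powerset.filter (fun s => s.card ≤ d)) := by
    intro s hs
    rw [Finset.mem_shatterer] at hs
    have hsub : s ⊆ Xf := by
      obtain ⟨A, hA𝒜, hsA⟩ := hs.exists_superset
      obtain ⟨v, _, rfl⟩ := Finset.mem_image.1 hA𝒜
      intro u hu
      exact (hTrmem v u).1 (hsA hu) |>.1
    have hcard : s.card ≤ d := by
      have hshat : Shatters {S : Set V | ∃ v : V, S = ball G ρ v} (↑s : Set V) := by
        intro Y hY
        have hYfin : Y.Finite := (Set.toFinite (↑s : Set V)).subset hY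
        have htsub : hYfin.toFinset ⊆ s := by
          intro u hu
          exact_mod_cast hY (hYfin.mem_toFinset.1 hu)
        obtain ⟨A, hA, hsA⟩ := hs htsub
        obtain ⟨v, _, rfl⟩ := Finset.mem_image.1 hA
        refine ⟨ball G ρ v, ⟨v, rfl⟩, ?_⟩
        ext u
        constructor
        · rintro ⟨hus, hub⟩
          have hus' : u ∈ s := by exact_mod_cast hus
          have huX : u ∈ Xf := hsub hus'
          have : u ∈ s ∩ Tr v := Finset.mem_inter.2 ⟨hus', (hTrmem v u).2 ⟨huX, hub⟩⟩
          rw [hsA] at this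
          exact hYfin.mem_toFinset.1 this
        · intro huY
          have hut : u ∈ hYfin.toFinset := hYfin.mem_toFinset.2 huY
          rw [← hsA] at hut
          have h1 := Finset.mem_inter.1 hut
          refine ⟨by exact_mod_cast h1.1, ((hTrmem v u).1 h1.2).2⟩
      have := hvc (↑s : Set V) hshat
      rwa [Set.ncard_coe_finset] at this
    exact Finset.mem_filter.2 ⟨Finset.mem_powerset.2 hsub, hcard⟩
  have h3 : (Xf.powerset.filter (fun s => s.card ≤ d)).card
      ≤ ∑ i ∈ Finset.range (d+1), Xf.card.choose i := by
    have hsub : (Xf.powerset.filter (fun s => s.card ≤ d))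
        ⊆ (Finset.range (d+1)).biUnion (fun i => Xf.powersetCard i) := by
      intro t ht
      rw [Finset.mem_filter, Finset.mem_powerset] at ht
      exact Finset.mem_biUnion.2 ⟨t.card, Finset.mem_range.2 (by omega),
        Finset.mem_powersetCard.2 ⟨ht.1, rfl⟩⟩
    calc (Xf.powerset.filter (fun s => s.card ≤ d)).card
        ≤ ((Finset.range (d+1)).biUnion (fun i => Xf.powersetCard i)).card :=
          Finset.card_le_card hsub
      _ ≤ ∑ i ∈ Finset.range (d+1), (Xf.powersetCard i).card := Finset.card_biUnion_le
      _ = ∑ i ∈ Finset.range (d+1), Xf.card.choose i := by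
          apply Finset.sum_congr rfl
          intro i _
          exact Finset.card_powersetCard i Xf
  exact h1.trans ((Finset.card_le_card h2).trans h3)

/-- VC bound for exact-distance spheres (with center), radius `r'+1`. -/
lemma sphere_vc_bound {V : Type} [Fintype V] {G : SimpleGraph V} {r' d1 d2 : ℕ}
    (hb1 : ∀ X' : Set V, Shatters {S : Set V | ∃ v : V, S = ball G (r'+1) v} X' → X'.ncard ≤ d1)
    (hb2 : ∀ X' : Set V, Shatters {S : Set V | ∃ v : V, S = ball G r' v} X' → X'.ncard ≤ d2)
    (X : Set V)
    (hsh : Shatters {S : Set V | ∃ v : V,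
      S = insert v {u : V | G.edist u v = ((r'+1 : ℕ) : ℕ∞)}} X) :
    X.ncard ≤ 64 + (d1+d2+4)*(d1+d2+4) := by
  classical
  rcases X.eq_empty_or_nonempty with rfl | ⟨x0, hx0⟩
  · simp
  haveI : Nonempty V := ⟨x0⟩
  set n := X.ncard with hn
  set Xf : Finset V := (Set.toFinite X).toFinset with hXf
  have hXfmem : ∀ u, u ∈ Xf ↔ u ∈ X := fun u => Set.Finite.mem_toFinset _
  have hncard : Xf.card = n := (Set.ncard_eq_toFinset_card X (Set.toFinite X)).symm
  set Tr : V → Finset V := fun v => Xf.filter (fun u => G.edist u v ≤ ((r'+1 : ℕ) : ℕ∞))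
    with hTrdef
  set Tr' : V → Finset V := fun v => Xf.filter (fun u => G.edist u v ≤ ((r' : ℕ) : ℕ∞))
    with hTr'def
  set T0 : V → Finset V := fun v => Xf.filter (fun u => u = v) with hT0def
  have hTrmem : ∀ v u, u ∈ Tr v ↔ u ∈ Xf ∧ G.edist u v ≤ ((r'+1 : ℕ) : ℕ∞) := by
    intro v u; simp [hTrdef]
  have hTr'mem : ∀ v u, u ∈ Tr' v ↔ u ∈ Xf ∧ G.edist u v ≤ ((r' : ℕ) : ℕ∞) := by
    intro v u; simp [hTr'def]
  -- centers
  have hv : ∀ Y : Finset V, Y ∈ Xf.powerset → ∃ v : V,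
      X ∩ insert v {u : V | G.edist u v = ((r'+1 : ℕ) : ℕ∞)} = ↑Y := by
    intro Y hY
    rw [Finset.mem_powerset] at hY
    obtain ⟨S, hSmem, hStr⟩ := hsh ↑Y (fun u hu => (hXfmem u).1 (hY hu))
    obtain ⟨v, rfl⟩ := hSmem
    exact ⟨v, hStr⟩
  set vv : Finset V → V := fun Y =>
    if h : Y ∈ Xf.powerset then (hv Y h).choose else Classical.arbitrary V with hvv
  have hvvspec : ∀ Y ∈ Xf.powerset,
      X ∩ insert (vv Y) {u : V | G.edist u (vv Y) = ((r'+1 : ℕ) : ℕ∞)} = ↑Y := by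
    intro Y hY
    simp only [hvv, dif_pos hY]
    exact (hv Y hY).choose_spec
  -- recovery
  have hrec : ∀ Y ∈ Xf.powerset, Y = ((Tr (vv Y)) \ (Tr' (vv Y))) ∪ T0 (vv Y) := by
    intro Y hY
    have hspec := hvvspec Y hY
    have hYX : ∀ u, u ∈ Y ↔ (u ∈ X ∧ (u = vv Y ∨ G.edist u (vv Y) = ((r'+1 : ℕ) : ℕ∞))) := by
      intro u
      constructor
      · intro hu
        have : u ∈ (↑Y : Set V) := by exact_mod_cast hu
        rw [← hspec] at this
        obtain ⟨h1, h2⟩ := this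
        rcases h2 with h2 | h2
        · exact ⟨h1, Or.inl h2⟩
        · exact ⟨h1, Or.inr h2⟩
      · rintro ⟨h1, h2⟩
        have : u ∈ X ∩ insert (vv Y) {u : V | G.edist u (vv Y) = ((r'+1 : ℕ) : ℕ∞)} := by
          refine ⟨h1, ?_⟩
          rcases h2 with h2 | h2
          · exact Or.inl h2
          · exact Or.inr h2
        rw [hspec] at this
        exact_mod_cast this
    ext u
    rw [hYX u]
    simp only [Finset.mem_union, Finset.mem_sdiff, hTrmem, hTr'mem, hT0def,
      Finset.mem_filter, hXfmem]
    constructor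
    · rintro ⟨h1, h2 | h2⟩
      · exact Or.inr ⟨h1, h2⟩
      · rw [edist_eq_succ_iff] at h2
        exact Or.inl ⟨⟨h1, h2.1⟩, fun hc => h2.2 hc.2⟩
    · rintro (⟨⟨h1, h2⟩, h3⟩ | ⟨h1, h2⟩)
      · refine ⟨h1, Or.inr ?_⟩
        rw [edist_eq_succ_iff]
        exact ⟨h2, fun hc => h3 ⟨h1, hc⟩⟩
      · exact ⟨h1, Or.inl h2⟩
  -- injectivity
  have hinj : Set.InjOn (fun Y => (Tr (vv Y), Tr' (vv Y), T0 (vv Y))) ↑(Xf.powerset) := by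
    intro Y1 h1 Y2 h2 heq
    simp only [Prod.mk.injEq] at heq
    rw [hrec Y1 (by exact_mod_cast h1), hrec Y2 (by exact_mod_cast h2),
      heq.1, heq.2.1, heq.2.2]
  -- counting
  have hmaps : ∀ Y ∈ Xf.powerset, (Tr (vv Y), Tr' (vv Y), T0 (vv Y)) ∈
      (Finset.univ.image Tr) ×ˢ ((Finset.univ.image Tr') ×ˢ (Finset.univ.image T0)) := by
    intro Y _
    refine Finset.mem_product.2 ⟨?_, Finset.mem_product.2 ⟨?_, ?_⟩⟩ <;>
      exact Finset.mem_image.2 ⟨vv Y, Finset.mem_univ _, rfl⟩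
  have hcount : 2^n ≤ (Finset.univ.image Tr).card *
      ((Finset.univ.image Tr').card * (Finset.univ.image T0).card) := by
    calc 2^n = Xf.powerset.card := by rw [Finset.card_powerset, hncard]
      _ ≤ ((Finset.univ.image Tr) ×ˢ ((Finset.univ.image Tr') ×ˢ (Finset.univ.image T0))).card :=
          Finset.card_le_card_of_injOn _ hmaps hinj
      _ = _ := by rw [Finset.card_product, Finset.card_product]
  -- bounds on factors
  have hB1 : (Finset.univ.image Tr).card ≤ ∑ i ∈ Finset.range (d1+1), n.choose i := by
    have := trace_card_bound (r'+1) d1 hb1 Xf Tr hTrmem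
    rwa [hncard] at this
  have hB2 : (Finset.univ.image Tr').card ≤ ∑ i ∈ Finset.range (d2+1), n.choose i := by
    have := trace_card_bound r' d2 hb2 Xf Tr' hTr'mem
    rwa [hncard] at this
  have hB3 : (Finset.univ.image T0).card ≤ n + 1 := by
    have hsub : (Finset.univ.image T0) ⊆ insert ∅ (Xf.image fun u => {u}) := by
      intro A hA
      obtain ⟨v, _, rfl⟩ := Finset.mem_image.1 hA
      by_cases hvXf : v ∈ Xf
      · have : T0 v = {v} := by
          ext u
          simp only [hT0def, Finset.mem_filter, Finset.mem_singleton]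
          exact ⟨fun h => h.2, fun h => ⟨h ▸ hvXf, h⟩⟩
        rw [this]
        exact Finset.mem_insert.2 (Or.inr (Finset.mem_image.2 ⟨v, hvXf, rfl⟩))
      · have : T0 v = ∅ := by
          ext u
          simp only [hT0def, Finset.mem_filter, Finset.notMem_empty, iff_false, not_and]
          intro h1 h2
          exact hvXf (h2 ▸ h1)
        rw [this]
        exact Finset.mem_insert_self _ _
    calc (Finset.univ.image T0).card ≤ (insert ∅ (Xf.image fun u => ({u} : Finset V))).card :=
          Finset.card_le_card hsub
      _ ≤ (Xf.image fun u => ({u} : Finset V)).card + 1 := Finset.card_insert_le _ _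
      _ ≤ Xf.card + 1 := by
          have := Finset.card_image_le (s := Xf) (f := fun u => ({u} : Finset V))
          omega
      _ = n + 1 := by rw [hncard]
  -- final numeric reasoning
  by_cases hsmall : n ≤ d1 + d2
  · have : d1 + d2 ≤ 64 + (d1+d2+4)*(d1+d2+4) := by nlinarith
    omega
  push_neg at hsmall
  have hd1n : d1 ≤ n := by omega
  have hd2n : d2 ≤ n := by omega
  have hfin : 2^n ≤ (n+1)^(d1+d2+3) := by
    calc 2^n ≤ (Finset.univ.image Tr).card *
        ((Finset.univ.image Tr').card * (Finset.univ.image T0).card) := hcount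
      _ ≤ (n+1)^(d1+1) * ((n+1)^(d2+1) * (n+1)) := by
          apply Nat.mul_le_mul (hB1.trans (sum_choose_le hd1n))
          exact Nat.mul_le_mul (hB2.trans (sum_choose_le hd2n)) hB3
      _ = (n+1)^(d1+d2+3) := by ring
  calc n ≤ 64 + (d1+d2+3+1)*(d1+d2+3+1) := main_numeric hfin
    _ = 64 + (d1+d2+4)*(d1+d2+4) := by norm_num

end VCAux

/-- Over a nowhere dense class, both the family of closed `r`-balls and the
family of exact-distance-`r` spheres with their centers have bounded VC-dimension. -/
theorem vc_dimension_balls_and_spheres_of_nowhereDense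
    (C : Set FinGraph) (hC : NowhereDense C) (r : ℕ) :
    ∃ c : ℕ, ∀ G ∈ C,
      VCDimLE {S : Set G.V | ∃ v : G.V, S = ball G.graph r v} c ∧
      VCDimLE {S : Set G.V | ∃ v : G.V,
        S = insert v {u : G.V | G.graph.edist u v = (r : ℕ∞)}} c := by
  obtain ⟨f, hf⟩ := hC
  refine ⟨f r + f (r-1) + 65 + (f r + f (r-1) + 4) * (f r + f (r-1) + 4), ?_⟩
  intro G hG
  have hb1 : ∀ X : Set G.V,
      Shatters {S : Set G.V | ∃ v : G.V, S = ball G.graph r v} X →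
      X.ncard ≤ f r :=
    fun X hX => VCAux.ball_vc_bound (hf r G hG) X hX
  constructor
  · intro X hX
    have := hb1 X hX
    omega
  · cases r with
    | zero =>
      intro X hX
      obtain ⟨S, ⟨v, rfl⟩, hS⟩ := hX X (subset_refl X)
      have hXsub : X ⊆ insert v {u : G.V | G.graph.edist u v = ((0:ℕ) : ℕ∞)} :=
        Set.inter_eq_left.1 hS
      have hXv : X ⊆ {v} := by
        intro u hu
        rcases hXsub hu with h | h
        · exact h
        · have : G.graph.edist u v = 0 := by simpa using h
          simp [SimpleGraph.edist_eq_zero_iff.1 this]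
      have := Set.ncard_le_ncard hXv (Set.finite_singleton v)
      rw [Set.ncard_singleton] at this
      omega
    | succ r' =>
      intro X hX
      have hb2 : ∀ X' : Set G.V,
          Shatters {S : Set G.V | ∃ v : G.V, S = ball G.graph r' v} X' →
          X'.ncard ≤ f r' :=
        fun X' hX' => VCAux.ball_vc_bound (hf r' G hG) X' hX'
      have hmain := VCAux.sphere_vc_bound hb1 hb2 X hX
      have hr' : r' + 1 - 1 = r' := by omega
      rw [hr'] at *
      omega
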